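/- Every homomorphism from a finite product of Łukasiewicz chains into a Łukasiewicz chain factors through a coordinate projection: let l ≥ 1, let n : Fin l → ℕ be positive, let m ≥ 1, and let γ : (∏_{i<l} Ł_{n_i}) → Łₘ be a homomorphism of MV-algebras (product with componentwise operations). Then there exists k < l such that γ a = γ b whenever a k = b k, and moreover n_k divides m. -/

import Mathlib

/-- The carrier of the Łukasiewicz chain Łₙ : {k/n : k ∈ ℕ, 0 ≤ k ≤ n} ⊆ ℚ. -/
abbrev Luk (n : ℕ+) : Type := {x : ℚ // ∃ k : ℕ, k ≤ (n : ℕ) ∧ x = (k : ℚ) / (n : ℕ)}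

/-- The constant 0 of Łₙ. -/
def lukZero (n : ℕ+) : Luk n := ⟨0, 0, Nat.zero_le _, by simp⟩

/-- The negation ¬x = 1 - x of Łₙ. -/
def lukNeg {n : ℕ+} (x : Luk n) : Luk n :=
  ⟨1 - x.1, by
    obtain ⟨k, hk, hx⟩ := x.2
    refine ⟨(n : ℕ) - k, Nat.sub_le _ _, ?_⟩
    have hn : ((n : ℕ) : ℚ) ≠ 0 := by exact_mod_cast n.pos.ne'
    rw [hx, Nat.cast_sub hk, sub_div, div_self hn]⟩

/-- The truncated sum x ⊕ y = min 1 (x + y) of Łₙ. -/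
def lukOplus {n : ℕ+} (x y : Luk n) : Luk n :=
  ⟨min 1 (x.1 + y.1), by
    obtain ⟨k, hk, hx⟩ := x.2
    obtain ⟨j, hj, hy⟩ := y.2
    refine ⟨min (n : ℕ) (k + j), min_le_left _ _, ?_⟩
    have hn : (0 : ℚ) < ((n : ℕ) : ℚ) := by exact_mod_cast n.pos
    rw [hx, hy, ← add_div]
    rcases le_total (k + j) (n : ℕ) with h | h
    · rw [min_eq_right h, min_eq_right]
      · push_cast; ring_nf
      · rw [div_le_one hn]; exact_mod_cast h
    · rw [min_eq_left h, min_eq_left, div_self hn.ne']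
      · rw [one_le_div hn]; exact_mod_cast h⟩

lemma luk_nonneg {n : ℕ+} (x : Luk n) : 0 ≤ x.1 := by
  obtain ⟨k, hk, hx⟩ := x.2; rw [hx]; positivity

lemma luk_le_one {n : ℕ+} (x : Luk n) : x.1 ≤ 1 := by
  obtain ⟨k, hk, hx⟩ := x.2
  rw [hx, div_le_one (by exact_mod_cast n.pos)]
  exact_mod_cast hk

@[simp] lemma lukZero_val (n : ℕ+) : (lukZero n).1 = 0 := rfl
@[simp] lemma lukNeg_val {n : ℕ+} (x : Luk n) : (lukNeg x).1 = 1 - x.1 := rfl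
@[simp] lemma lukOplus_val {n : ℕ+} (x y : Luk n) : (lukOplus x y).1 = min 1 (x.1 + y.1) := rfl

def lukPow {n : ℕ+} : ℕ → Luk n → Luk n
  | 0, _ => lukZero n
  | j+1, v => lukOplus (lukPow j v) v

lemma lukPow_val {n : ℕ+} (j : ℕ) (v : Luk n) : (lukPow j v).1 = min 1 ((j : ℚ) * v.1) := by
  induction j with
  | zero => simp [lukPow]
  | succ j ih =>
    have hv := luk_nonneg v
    have hcast : ((j+1 : ℕ) : ℚ) * v.1 = (j : ℚ) * v.1 + v.1 := by push_cast; ring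
    simp only [lukPow, lukOplus_val, ih, hcast]
    rcases le_or_gt ((j : ℚ) * v.1) 1 with h | h
    · rw [min_eq_right h]
    · rw [min_eq_left h.le, min_eq_left (by linarith), min_eq_left (by linarith)]

lemma luk_hom_dvd (N M : ℕ+) (φ : Luk N → Luk M)
    (hop : ∀ x y, φ (lukOplus x y) = lukOplus (φ x) (φ y))
    (hneg : ∀ x, φ (lukNeg x) = lukNeg (φ x))
    (hz : φ (lukZero N) = lukZero M) : (N : ℕ) ∣ (M : ℕ) := by
  have hN : (0:ℚ) < ((N:ℕ):ℚ) := by exact_mod_cast N.pos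
  have hM : (0:ℚ) < ((M:ℕ):ℚ) := by exact_mod_cast M.pos
  set atom : Luk N := ⟨(1:ℚ)/((N:ℕ):ℚ), 1, N.one_le, by push_cast; ring⟩ with hatom
  have hpow : ∀ (j : ℕ) (v : Luk N), φ (lukPow j v) = lukPow j (φ v) := by
    intro j v
    induction j with
    | zero => simpa [lukPow] using hz
    | succ j ih => simp [lukPow, hop, ih]
  obtain ⟨t, htle, htv⟩ := (φ atom).2
  have h1 : lukPow (N:ℕ) atom = lukNeg (lukZero N) := by
    apply Subtype.ext
    rw [lukPow_val]
    simp [hatom, mul_one_div, div_self hN.ne']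
  have h2 : lukPow ((N:ℕ)-1) atom = lukNeg atom := by
    apply Subtype.ext
    rw [lukPow_val]
    simp only [lukNeg_val, hatom]
    have hle : 1 ≤ (N:ℕ) := N.one_le
    rw [Nat.cast_sub hle, mul_one_div, sub_div, div_self hN.ne', Nat.cast_one]
    apply min_eq_right
    have : (0:ℚ) < 1/((N:ℕ):ℚ) := by positivity
    linarith
  have E1 : min 1 (((N:ℕ):ℚ) * ((t:ℚ)/((M:ℕ):ℚ))) = 1 := by
    have h1' : (φ (lukPow (N:ℕ) atom)).1 = (φ (lukNeg (lukZero N))).1 := by rw [h1]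
    rw [hpow, hneg, hz, lukPow_val, htv] at h1'
    simpa using h1'
  have E2 : min 1 ((((N:ℕ)-1 : ℕ):ℚ) * ((t:ℚ)/((M:ℕ):ℚ))) = 1 - (t:ℚ)/((M:ℕ):ℚ) := by
    have h2' : (φ (lukPow ((N:ℕ)-1) atom)).1 = (φ (lukNeg atom)).1 := by rw [h2]
    rw [hpow, hneg, lukPow_val, htv, lukNeg_val, htv] at h2'
    exact h2'
  have ht0 : t ≠ 0 := by
    intro h
    rw [h] at E1
    norm_num at E1
  have ht1 : (1:ℚ) ≤ (t:ℚ) := by exact_mod_cast Nat.one_le_iff_ne_zero.mpr ht0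
  have htM : (0:ℚ) < (t:ℚ)/((M:ℕ):ℚ) := by positivity
  have E2' : (((N:ℕ):ℚ)-1) * ((t:ℚ)/((M:ℕ):ℚ)) = 1 - (t:ℚ)/((M:ℕ):ℚ) := by
    have hle : 1 ≤ (N:ℕ) := N.one_le
    rw [Nat.cast_sub hle, Nat.cast_one] at E2
    rcases min_cases 1 ((((N:ℕ):ℚ)-1) * ((t:ℚ)/((M:ℕ):ℚ))) with ⟨hm, _⟩ | ⟨hm, _⟩
    · rw [hm] at E2; linarith
    · rw [hm] at E2; exact E2
  have key : ((N:ℕ):ℚ) * (t:ℚ) = ((M:ℕ):ℚ) := by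
    field_simp at E2'
    linarith [E2']
  have keyN : (N:ℕ) * t = (M:ℕ) := by exact_mod_cast key
  exact ⟨t, keyN.symm⟩


/-- Every homomorphism from a finite product of Łukasiewicz chains into a
Łukasiewicz chain factors through a coordinate projection, and the corresponding
n_k divides m. -/
theorem hom_from_prod_factors (l : ℕ) (hl : 1 ≤ l) (n : Fin l → ℕ+) (m : ℕ+)
    (γ : (∀ i, Luk (n i)) → Luk m)
    (hop : ∀ x y, γ (fun i => lukOplus (x i) (y i)) = lukOplus (γ x) (γ y))
    (hneg : ∀ x, γ (fun i => lukNeg (x i)) = lukNeg (γ x))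
    (hz : γ (fun i => lukZero (n i)) = lukZero m) :
    ∃ k : Fin l, (∀ a b, a k = b k → γ a = γ b) ∧ ((n k : ℕ) ∣ (m : ℕ)) := by
  classical
  set u : Fin l → (∀ i, Luk (n i)) :=
    fun i => fun j => if j = i then lukNeg (lukZero (n j)) else lukZero (n j) with hu
  have hγone : γ (fun i => lukNeg (lukZero (n i))) = lukNeg (lukZero m) := by
    rw [hneg, hz]
  have hu_idem : ∀ i, lukOplus (γ (u i)) (γ (u i)) = γ (u i) := by
    intro i
    rw [← hop]
    congr 1
    funext j
    apply Subtype.ext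
    by_cases h : j = i <;> simp [hu, h]
  have hval : ∀ i, (γ (u i)).1 = 0 ∨ (γ (u i)).1 = 1 := by
    intro i
    have hh := congrArg Subtype.val (hu_idem i)
    simp only [lukOplus_val] at hh
    rcases le_or_gt ((γ (u i)).1 + (γ (u i)).1) 1 with h | h
    · left; rw [min_eq_right h] at hh; linarith
    · right; rw [min_eq_left h.le] at hh; exact hh.symm
  have hexists : ∃ k, (γ (u k)).1 = 1 := by
    by_contra hcon
    push_neg at hcon
    have hall : ∀ i, (γ (u i)).1 = 0 := fun i => (hval i).resolve_right (hcon i)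
    have hind : ∀ S : Finset (Fin l),
        (γ (fun j => if j ∈ S then lukNeg (lukZero (n j)) else lukZero (n j))).1 = 0 := by
      intro S
      induction S using Finset.induction with
      | empty => simpa using congrArg Subtype.val hz
      | @insert a S hj ih =>
        have key : (fun j => if j ∈ insert a S then lukNeg (lukZero (n j)) else lukZero (n j))
            = fun j => lukOplus ((fun j' => if j' ∈ S then lukNeg (lukZero (n j'))
                else lukZero (n j')) j) (u a j) := by
          funext j
          apply Subtype.ext
          by_cases h1 : j = a
          · subst h1
            have : j ∉ S := hj
            simp [hu, this]
          · by_cases h2 : j ∈ S <;> simp [hu, h1, h2]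
        rw [key, hop]
        simp [lukOplus_val, ih, hall a]
    have hu2 := hind Finset.univ
    simp only [Finset.mem_univ, if_true] at hu2
    rw [hγone] at hu2
    norm_num at hu2
  obtain ⟨k, hk1⟩ := hexists
  have hfac : ∀ a b, a k = b k → γ a = γ b := by
    intro a b hab
    have key : ∀ c, γ (fun i => lukOplus (c i) (lukNeg (u k i))) = γ c := by
      intro c
      rw [hop]
      apply Subtype.ext
      rw [lukOplus_val, hneg, lukNeg_val, hk1]
      simp [min_eq_right (luk_le_one (γ c))]
    have argeq : (fun i => lukOplus (a i) (lukNeg (u k i)))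
        = fun i => lukOplus (b i) (lukNeg (u k i)) := by
      funext i
      by_cases h : i = k
      · subst h; rw [hab]
      · apply Subtype.ext
        simp only [lukOplus_val, lukNeg_val]
        have h0 : (u k i).1 = 0 := by simp [hu, h]
        rw [h0, sub_zero,
          min_eq_left (by have := luk_nonneg (a i); linarith),
          min_eq_left (by have := luk_nonneg (b i); linarith)]
    calc γ a = γ (fun i => lukOplus (a i) (lukNeg (u k i))) := (key a).symm
      _ = γ (fun i => lukOplus (b i) (lukNeg (u k i))) := by rw [argeq]
      _ = γ b := key b
  refine ⟨k, hfac, ?_⟩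
  set φ : Luk (n k) → Luk m :=
    fun x => γ (Function.update (fun i => lukZero (n i)) k x) with hφ
  apply luk_hom_dvd (n k) m φ
  · intro x y
    have h1 : γ (Function.update (fun i => lukZero (n i)) k (lukOplus x y))
        = γ (fun i => lukOplus ((Function.update (fun i => lukZero (n i)) k x) i)
            ((Function.update (fun i => lukZero (n i)) k y) i)) := by
      apply hfac
      simp [Function.update_self]
    exact h1.trans (hop _ _)
  · intro x
    have h1 : γ (Function.update (fun i => lukZero (n i)) k (lukNeg x))
        = γ (fun i => lukNeg ((Function.update (fun i => lukZero (n i)) k x) i)) := by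
      apply hfac
      simp [Function.update_self]
    exact h1.trans (hneg _)
  · have h1 : γ (Function.update (fun i => lukZero (n i)) k (lukZero (n k)))
        = γ (fun i => lukZero (n i)) := by
      apply hfac
      simp [Function.update_self]
    exact h1.trans hz
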